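/- Let G be a finite tree (a connected acyclic simple graph). Then G is weakly closed if and only if G is a caterpillar, i.e., there exists a path in G such that every vertex of G either lies on the path or is adjacent to a vertex of the path. -/

import Mathlib

open SimpleGraph Walk

section Aux
variable {V : Type*} {G : SimpleGraph V}

lemma no_path2_adj (hac : G.IsAcyclic) {x y z : V} (hxy : G.Adj x y) (hyz : G.Adj y z)
    (hxz : x ≠ z) : ¬ G.Adj x z := by
  intro h
  have e1 := hxy.ne; have e2 := hyz.ne
  apply hac (Walk.cons h (Walk.cons hyz.symm (Walk.cons hxy.symm Walk.nil)))
  rw [Walk.cons_isCycle_iff]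
  constructor
  · simp [Walk.isPath_def]; aesop
  · simp [Sym2.eq_iff]; aesop

lemma no_path3_adj (hac : G.IsAcyclic) {x y z w : V} (hxy : G.Adj x y) (hyz : G.Adj y z)
    (hzw : G.Adj z w) (hxz : x ≠ z) (hyw : y ≠ w) (hxw : x ≠ w) : ¬ G.Adj x w := by
  intro h
  have e1 := hxy.ne; have e2 := hyz.ne; have e3 := hzw.ne
  apply hac (Walk.cons h (Walk.cons hzw.symm (Walk.cons hyz.symm (Walk.cons hxy.symm Walk.nil))))
  rw [Walk.cons_isCycle_iff]
  constructor
  · simp [Walk.isPath_def]; aesop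
  · simp [Sym2.eq_iff]; aesop

lemma connect_in_support {u w : V} (p : G.Walk u w) {a b : V} [DecidableEq V]
    (ha : a ∈ p.support) (hb : b ∈ p.support) :
    ∃ q : G.Walk a b, q.IsPath ∧ (∀ x ∈ q.support, x ∈ p.support) ∧
      (∀ e ∈ q.edges, e ∈ p.edges) := by
  rw [← p.take_spec ha, mem_support_append_iff] at hb
  rcases hb with hb | hb
  · have hb' : b ∈ (p.takeUntil a ha).reverse.support := by
      rwa [support_reverse, List.mem_reverse]
    refine ⟨((p.takeUntil a ha).reverse.takeUntil b hb').bypass, bypass_isPath _, ?_, ?_⟩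
    · intro x hx
      have := support_bypass_subset _ hx
      have := support_takeUntil_subset _ hb' this
      rw [support_reverse, List.mem_reverse] at this
      exact support_takeUntil_subset _ ha this
    · intro e he
      have := edges_bypass_subset _ he
      have := edges_takeUntil_subset _ hb' this
      rw [edges_reverse, List.mem_reverse] at this
      exact edges_takeUntil_subset _ ha this
  · refine ⟨((p.dropUntil a ha).takeUntil b hb).bypass, bypass_isPath _, ?_, ?_⟩
    · intro x hx
      exact support_dropUntil_subset _ ha
        (support_takeUntil_subset _ hb (support_bypass_subset _ hx))
    · intro e he
      exact edges_dropUntil_subset _ ha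
        (edges_takeUntil_subset _ hb (edges_bypass_subset _ he))
lemma attach_unique (hac : G.IsAcyclic) {u w : V} (p : G.Walk u w) {x v v' : V} [DecidableEq V]
    (hx : x ∉ p.support) (hv : v ∈ p.support) (hv' : v' ∈ p.support)
    (h1 : G.Adj x v) (h2 : G.Adj x v') : v = v' := by
  by_contra hne
  obtain ⟨q, hq, hqs, -⟩ := connect_in_support p hv hv'
  have hxq : x ∉ q.support := fun h => hx (hqs x h)
  apply hac (Walk.cons h2.symm (Walk.cons h1 q))
  rw [Walk.cons_isCycle_iff]
  refine ⟨hq.cons hxq, ?_⟩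
  simp only [Walk.edges_cons, List.mem_cons]
  rintro (h | h)
  · rw [Sym2.eq_iff] at h
    rcases h with ⟨h1', h2'⟩ | ⟨h1', h2'⟩
    · exact hx (h2' ▸ hv)
    · exact hne (h1' ▸ rfl)
  · exact hxq (q.snd_mem_support_of_mem_edges h)

lemma off_path_no_adj (hac : G.IsAcyclic) {u w : V} (p : G.Walk u w) {x x' v v' : V}
    [DecidableEq V]
    (hx : x ∉ p.support) (hx' : x' ∉ p.support) (hv : v ∈ p.support) (hv' : v' ∈ p.support)
    (hxx' : G.Adj x x') (h1 : G.Adj x v) (h2 : G.Adj x' v') : False := by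
  have hxv' : x ≠ v' := fun h => hx (h ▸ hv')
  have hx'v : x' ≠ v := fun h => hx' (h ▸ hv)
  have hx'v' : x' ≠ v' := fun h => hx' (h ▸ hv')
  rcases eq_or_ne v v' with rfl | hne
  · exact no_path2_adj hac hxx' h2 (fun h => hx (h ▸ hv)) h1
  · obtain ⟨q, hq, hqs, -⟩ := connect_in_support p hv hv'
    have hxq : x ∉ q.support := fun h => hx (hqs x h)
    have hx'q : x' ∉ q.support := fun h => hx' (hqs x' h)
    apply hac (Walk.cons h2.symm (Walk.cons hxx'.symm (Walk.cons h1 q)))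
    rw [Walk.cons_isCycle_iff]
    refine ⟨(hq.cons hxq).cons ?_, ?_⟩
    · simp only [Walk.support_cons, List.mem_cons]
      rintro (rfl | h)
      · exact hxx'.ne rfl
      · exact hx'q h
    · simp only [Walk.edges_cons, List.mem_cons]
      rintro (h | h | h)
      · rw [Sym2.eq_iff] at h; aesop
      · rw [Sym2.eq_iff] at h; aesop
      · exact hx'q (q.snd_mem_support_of_mem_edges h)


lemma getVert_mem_support' {u w : V} (p : G.Walk u w) (i : ℕ) : p.getVert i ∈ p.support := by
  rcases le_or_gt i p.length with h | h
  · exact mem_support_iff_exists_getVert.2 ⟨i, rfl, h⟩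
  · rw [p.getVert_of_length_le h.le]
    exact p.end_mem_support

lemma getVert_inj {u w : V} (p : G.Walk u w) (hp : p.IsPath) :
    ∀ i j : ℕ, i ≤ p.length → j ≤ p.length → p.getVert i = p.getVert j → i = j := by
  induction p with
  | nil => intro i j hi hj _; simp at hi hj; omega
  | cons h q ih =>
    intro i j hi hj hij
    rw [Walk.isPath_def, Walk.support_cons, List.nodup_cons] at hp
    obtain ⟨hu, hq⟩ := hp
    match i, j with
    | 0, 0 => rfl
    | 0, (j+1) =>
      exfalso
      rw [Walk.getVert_zero, Walk.getVert_cons_succ] at hij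
      exact hu (hij ▸ getVert_mem_support' q j)
    | (i+1), 0 =>
      exfalso
      rw [Walk.getVert_zero, Walk.getVert_cons_succ] at hij
      exact hu (hij ▸ getVert_mem_support' q i)
    | (i+1), (j+1) =>
      rw [Walk.getVert_cons_succ, Walk.getVert_cons_succ] at hij
      simp only [Walk.length_cons] at hi hj
      rw [ih ((Walk.isPath_def _).2 hq) i j (by omega) (by omega) hij]

lemma edge_getVert {u w : V} (p : G.Walk u w) {a b : V} (h : s(a, b) ∈ p.edges) :
    ∃ i < p.length, (p.getVert i = a ∧ p.getVert (i+1) = b) ∨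
      (p.getVert i = b ∧ p.getVert (i+1) = a) := by
  induction p with
  | nil => simp at h
  | cons hadj q ih =>
    rw [Walk.edges_cons, List.mem_cons] at h
    rcases h with h | h
    · refine ⟨0, by simp [Nat.succ_pos], ?_⟩
      rw [Sym2.eq_iff] at h
      rcases h with ⟨h1, h2⟩ | ⟨h1, h2⟩
      · left
        exact ⟨by rw [Walk.getVert_zero]; exact h1.symm,
          by rw [Walk.getVert_cons_succ, Walk.getVert_zero]; exact h2.symm⟩
      · right
        exact ⟨by rw [Walk.getVert_zero]; exact h2.symm,
          by rw [Walk.getVert_cons_succ, Walk.getVert_zero]; exact h1.symm⟩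
    · obtain ⟨i, hi, hh⟩ := ih h
      exact ⟨i + 1, by simpa using Nat.succ_lt_succ hi, by
        rw [Walk.getVert_cons_succ, Walk.getVert_cons_succ]; exact hh⟩


lemma path_length_eq_dist (hG : G.IsTree) {a b : V} (q : G.Walk a b) (hq : q.IsPath) :
    q.length = G.dist a b := by
  obtain ⟨r, hr, hrl⟩ := (hG.isConnected a b).exists_path_of_dist
  obtain ⟨p₀, -, hu⟩ := hG.existsUnique_path a b
  rw [← hrl, hu q hq, hu r hr]


lemma adj_support_edge (hG : G.IsTree) {u w : V} (p : G.Walk u w) {v v' : V} [DecidableEq V]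
    (hv : v ∈ p.support) (hv' : v' ∈ p.support) (hadj : G.Adj v v') :
    s(v, v') ∈ p.edges := by
  obtain ⟨q, hq, -, hqe⟩ := connect_in_support p hv hv'
  obtain ⟨p₀, -, huniq⟩ := hG.existsUnique_path v v'
  have hedge : (Walk.cons hadj Walk.nil : G.Walk v v').IsPath := by
    simp [Walk.isPath_def, hadj.ne]
  have : q = Walk.cons hadj Walk.nil := (huniq q hq).trans (huniq _ hedge).symm
  apply hqe
  rw [this]
  simp


section Spider
variable {α : Type*} [LinearOrder α] {σp : V → α}

lemma spiderA (hinj : Function.Injective σp)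
    (H : ∀ i j k, G.Adj i j → σp i < σp k → σp k < σp j → G.Adj i k ∨ G.Adj k j)
    {c ai aj bi bj : V}
    (eci : G.Adj c ai) (ecj : G.Adj c aj) (ei : G.Adj ai bi) (ej : G.Adj aj bj)
    (nij : ¬ G.Adj ai aj) (ncbi : ¬ G.Adj c bi) (nibj : ¬ G.Adj ai bj) (njbi : ¬ G.Adj aj bi)
    (h1 : σp c < σp ai) (h2 : σp ai < σp aj) :
    σp bi < σp c ∧ σp ai < σp bj := by
  have hbic : bi ≠ c := fun h => (h ▸ njbi) ecj.symm
  have hbiaj : bi ≠ aj := fun h => nij (h ▸ ei)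
  constructor
  · rcases lt_trichotomy (σp bi) (σp c) with h | h | h
    · exact h
    · exact absurd (hinj h) hbic
    · exfalso
      rcases lt_trichotomy (σp bi) (σp aj) with h' | h' | h'
      · rcases H c aj bi ecj h h' with hh | hh
        · exact ncbi hh
        · exact njbi hh.symm
      · exact hbiaj (hinj h')
      · rcases H ai bi aj ei h2 h' with hh | hh
        · exact nij hh
        · exact njbi hh
  · rcases lt_trichotomy (σp ai) (σp bj) with h | h | h
    · exact h
    · exact absurd (by rw [hinj h]; exact ej.symm : G.Adj ai aj) nij
    · exfalso
      rcases H bj aj ai ej.symm h h2 with hh | hh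
      · exact nibj hh.symm
      · exact nij hh

lemma spiderUp2 (hinj : Function.Injective σp)
    (H : ∀ i j k, G.Adj i j → σp i < σp k → σp k < σp j → G.Adj i k ∨ G.Adj k j)
    {c x y z bx by' bz : V}
    (ecx : G.Adj c x) (ecy : G.Adj c y) (ecz : G.Adj c z)
    (ex : G.Adj x bx) (ey : G.Adj y by') (ez : G.Adj z bz)
    (nxy : ¬ G.Adj x y) (nxz : ¬ G.Adj x z) (nyz : ¬ G.Adj y z)
    (ncbx : ¬ G.Adj c bx) (ncby : ¬ G.Adj c by') (ncbz : ¬ G.Adj c bz)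
    (nxby : ¬ G.Adj x by') (nxbz : ¬ G.Adj x bz)
    (nybx : ¬ G.Adj y bx) (nybz : ¬ G.Adj y bz)
    (nzbx : ¬ G.Adj z bx) (nzby : ¬ G.Adj z by')
    (h1 : σp c < σp x) (h2 : σp x < σp y) : False := by
  have hbx := (spiderA hinj H ecx ecy ex ey nxy ncbx nxby nybx h1 h2).1
  rcases lt_trichotomy (σp z) (σp c) with h | h | h
  · -- z below c
    rcases lt_trichotomy (σp z) (σp bx) with h' | h' | h'
    · rcases H z c bx ecz.symm h' hbx with hh | hh
      · exact nzbx hh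
      · exact ncbx hh.symm
    · exact ncbx ((hinj h') ▸ ecz)
    · rcases H bx x z ex.symm h' (h.trans h1) with hh | hh
      · exact nzbx hh.symm
      · exact nxz hh.symm
  · exact ecz.ne' (hinj h)
  · -- z above c
    rcases lt_trichotomy (σp z) (σp x) with h' | h' | h'
    · -- sorted z < x < y : A on (x,y) gives bx < c; z between bx and x
      rcases H bx x z ex.symm (hbx.trans h) h' with hh | hh
      · exact nzbx hh.symm
      · exact nxz hh.symm
    · exact nxbz ((hinj h') ▸ ez)
    · rcases lt_trichotomy (σp z) (σp y) with h'' | h'' | h''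
      · -- x < z < y : A on (z,y) gives bz < c; x between bz and z
        have hbz := (spiderA hinj H ecz ecy ez ey (fun hh => nyz hh.symm) ncbz nzby nybz h h'').1
        rcases H bz z x ez.symm (hbz.trans h1) h' with hh | hh
        · exact nxbz hh.symm
        · exact nxz hh
      · exact nybz ((hinj h'') ▸ ez)
      · -- x < y < z : A on (y,z) gives by' < c; x between by' and y
        have hby := (spiderA hinj H ecy ecz ey ez nyz ncby nybz nzby (h1.trans h2) h'').1
        rcases H by' y x ey.symm (hby.trans h1) h2 with hh | hh
        · exact nxby hh.symm
        · exact nxy hh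

lemma spiderUp2' (hinj : Function.Injective σp)
    (H : ∀ i j k, G.Adj i j → σp i < σp k → σp k < σp j → G.Adj i k ∨ G.Adj k j)
    {c x y z bx by' bz : V}
    (ecx : G.Adj c x) (ecy : G.Adj c y) (ecz : G.Adj c z)
    (ex : G.Adj x bx) (ey : G.Adj y by') (ez : G.Adj z bz)
    (nxy : ¬ G.Adj x y) (nxz : ¬ G.Adj x z) (nyz : ¬ G.Adj y z)
    (ncbx : ¬ G.Adj c bx) (ncby : ¬ G.Adj c by') (ncbz : ¬ G.Adj c bz)
    (nxby : ¬ G.Adj x by') (nxbz : ¬ G.Adj x bz)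
    (nybx : ¬ G.Adj y bx) (nybz : ¬ G.Adj y bz)
    (nzbx : ¬ G.Adj z bx) (nzby : ¬ G.Adj z by')
    (h1 : σp c < σp x) (h2 : σp c < σp y) : False := by
  rcases lt_trichotomy (σp x) (σp y) with h | h | h
  · exact spiderUp2 hinj H ecx ecy ecz ex ey ez nxy nxz nyz ncbx ncby ncbz nxby nxbz nybx nybz
      nzbx nzby h1 h
  · exact nybx ((hinj h) ▸ ex)
  · exact spiderUp2 hinj H ecy ecx ecz ey ex ez (fun hh => nxy hh.symm) nyz nxz ncby ncbx ncbz
      nybx nybz nxby nxbz (fun hh => nzby hh) (fun hh => nzbx hh) h2 h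

lemma spider_false (hinj : Function.Injective σp)
    (H : ∀ i j k, G.Adj i j → σp i < σp k → σp k < σp j → G.Adj i k ∨ G.Adj k j)
    {c a1 a2 a3 b1 b2 b3 : V}
    (e1 : G.Adj c a1) (e2 : G.Adj c a2) (e3 : G.Adj c a3)
    (f1 : G.Adj a1 b1) (f2 : G.Adj a2 b2) (f3 : G.Adj a3 b3)
    (n12 : ¬ G.Adj a1 a2) (n13 : ¬ G.Adj a1 a3) (n23 : ¬ G.Adj a2 a3)
    (ncb1 : ¬ G.Adj c b1) (ncb2 : ¬ G.Adj c b2) (ncb3 : ¬ G.Adj c b3)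
    (n1b2 : ¬ G.Adj a1 b2) (n1b3 : ¬ G.Adj a1 b3) (n2b1 : ¬ G.Adj a2 b1)
    (n2b3 : ¬ G.Adj a2 b3) (n3b1 : ¬ G.Adj a3 b1) (n3b2 : ¬ G.Adj a3 b2) : False := by
  set σq : V → αᵒᵈ := fun v => OrderDual.toDual (σp v) with hσq
  have hinj' : Function.Injective σq := fun a b h => hinj (by simpa [hσq] using h)
  have H' : ∀ i j k, G.Adj i j → σq i < σq k → σq k < σq j → G.Adj i k ∨ G.Adj k j := by
    intro i j k hij hh1 hh2
    rcases H j i k hij.symm (by simpa [hσq] using hh2) (by simpa [hσq] using hh1) with h | h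
    · exact Or.inr h.symm
    · exact Or.inl h.symm
  have hd : ∀ a b : V, σq a < σq b ↔ σp b < σp a := by intro a b; simp [hσq]
  rcases lt_trichotomy (σp c) (σp a1) with h1 | h1 | h1
  · rcases lt_trichotomy (σp c) (σp a2) with h2 | h2 | h2
    · exact spiderUp2' hinj H e1 e2 e3 f1 f2 f3 n12 n13 n23 ncb1 ncb2 ncb3 n1b2 n1b3 n2b1 n2b3
        n3b1 n3b2 h1 h2
    · exact e2.ne (hinj h2)
    · rcases lt_trichotomy (σp c) (σp a3) with h3 | h3 | h3
      · exact spiderUp2' hinj H e1 e3 e2 f1 f3 f2 n13 n12 (fun hh => n23 hh.symm) ncb1 ncb3 ncb2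
          n1b3 n1b2 n3b1 n3b2 n2b1 n2b3 h1 h3
      · exact e3.ne (hinj h3)
      · exact spiderUp2' hinj' H' e2 e3 e1 f2 f3 f1 n23 (fun hh => n12 hh.symm)
          (fun hh => n13 hh.symm) ncb2 ncb3 ncb1 n2b3 n2b1 n3b2 n3b1 n1b2 n1b3
          ((hd _ _).2 h2) ((hd _ _).2 h3)
  · exact e1.ne (hinj h1)
  · rcases lt_trichotomy (σp c) (σp a2) with h2 | h2 | h2
    · rcases lt_trichotomy (σp c) (σp a3) with h3 | h3 | h3
      · exact spiderUp2' hinj H e2 e3 e1 f2 f3 f1 n23 (fun hh => n12 hh.symm)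
          (fun hh => n13 hh.symm) ncb2 ncb3 ncb1 n2b3 n2b1 n3b2 n3b1 n1b2 n1b3 h2 h3
      · exact e3.ne (hinj h3)
      · exact spiderUp2' hinj' H' e1 e3 e2 f1 f3 f2 n13 n12 (fun hh => n23 hh.symm) ncb1 ncb3
          ncb2 n1b3 n1b2 n3b1 n3b2 n2b1 n2b3 ((hd _ _).2 h1) ((hd _ _).2 h3)
    · exact e2.ne (hinj h2)
    · exact spiderUp2' hinj' H' e1 e2 e3 f1 f2 f3 n12 n13 n23 ncb1 ncb2 ncb3 n1b2 n1b3 n2b1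
        n2b3 n3b1 n3b2 ((hd _ _).2 h1) ((hd _ _).2 h2)


end Spider

lemma exists_attach {S : V → Prop} [DecidablePred S] :
    ∀ {a u : V} (_Q : G.Walk a u), ¬ S a → (∀ s, S s → ¬ G.Adj a s) → S u →
    ∃ z y q, ¬ S z ∧ ¬ S y ∧ S q ∧ G.Adj z y ∧ G.Adj y q := by
  intro a u Q
  induction Q with
  | nil => intro h1 _ h3; exact absurd h3 h1
  | @cons a v u h q ih =>
    intro h1 h2 h3
    by_cases hv : S v
    · exact absurd h (h2 _ hv)
    · by_cases hadj : ∃ s, S s ∧ G.Adj v s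
      · obtain ⟨s, hs, hvs⟩ := hadj
        exact ⟨a, v, s, h1, hv, hs, h, hvs⟩
      · exact ih hv (fun s hs ha => hadj ⟨s, hs, ha⟩) h3

theorem forward_dir {V : Type*} [Fintype V] (G : SimpleGraph V) (hG : G.IsTree)
    (σ : V ≃ Fin (Fintype.card V))
    (H : ∀ i j k : V, G.Adj i j → σ i < σ k → σ k < σ j → G.Adj i k ∨ G.Adj k j) :
    ∃ (u w : V) (P : G.Walk u w), P.IsPath ∧
      ∀ x : V, x ∈ P.support ∨ ∃ y ∈ P.support, G.Adj x y := by
  classical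
  have hne : Nonempty V := hG.isConnected.nonempty
  have hac : G.IsAcyclic := hG.IsAcyclic
  obtain ⟨⟨u, w⟩, hmax⟩ := Finite.exists_max (fun p : V × V => G.dist p.1 p.2)
  obtain ⟨P, hP, -⟩ := hG.existsUnique_path u w
  refine ⟨u, w, P, hP, fun x => ?_⟩
  by_contra hx
  push_neg at hx
  obtain ⟨hx1, hx2⟩ := hx
  obtain ⟨z, y, c, hz, hy, hc, hzy, hyc⟩ :=
    (hG.isConnected x u).elim fun Q =>
      exists_attach (S := (· ∈ P.support)) Q hx1 (fun s hs ha => hx2 s hs ha) P.start_mem_support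
  -- set up indices
  set L := P.length with hL
  have hLdist : L = G.dist u w := path_length_eq_dist hG P hP
  set R1 := P.takeUntil c hc with hR1
  set R2 := P.dropUntil c hc with hR2
  set t := R1.length with ht
  have htsum : t + R2.length = L := by
    have hh := congrArg Walk.length (P.take_spec hc)
    rw [Walk.length_append] at hh
    rw [ht, hR1, hR2, hL]
    exact hh
  have hyR2 : y ∉ R2.support := fun h => hy (P.support_dropUntil_subset hc h)
  have hzR2 : z ∉ R2.support := fun h => hz (P.support_dropUntil_subset hc h)
  have hyR1 : y ∉ R1.reverse.support := fun h => hy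
    (P.support_takeUntil_subset hc (by rwa [Walk.support_reverse, List.mem_reverse] at h))
  have hzR1 : z ∉ R1.reverse.support := fun h => hz
    (P.support_takeUntil_subset hc (by rwa [Walk.support_reverse, List.mem_reverse] at h))
  have hW1 : (Walk.cons hzy (Walk.cons hyc R2)).IsPath := by
    refine Walk.IsPath.cons (Walk.IsPath.cons (hP.dropUntil hc) hyR2) ?_
    simp only [Walk.support_cons, List.mem_cons]
    rintro (rfl | h)
    · exact hzy.ne rfl
    · exact hzR2 h
  have hW2 : (Walk.cons hzy (Walk.cons (hyc : G.Adj y c) R1.reverse)).IsPath := by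
    refine Walk.IsPath.cons (Walk.IsPath.cons ((hP.takeUntil hc).reverse) hyR1) ?_
    simp only [Walk.support_cons, List.mem_cons]
    rintro (rfl | h)
    · exact hzy.ne rfl
    · exact hzR1 h
  have hd1 : R2.length + 2 ≤ L := by
    have h1 := path_length_eq_dist hG _ hW1
    have h2 : G.dist z w ≤ G.dist u w := hmax (z, w)
    simp only [Walk.length_cons] at h1
    omega
  have hd2 : t + 2 ≤ L := by
    have h1 := path_length_eq_dist hG _ hW2
    have h2 : G.dist z u ≤ G.dist u w := hmax (z, u)
    simp only [Walk.length_cons, Walk.length_reverse] at h1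
    rw [← ht] at h1
    omega
  have ht2 : 2 ≤ t := by omega
  have htL : t ≤ L := by omega
  have hPt : P.getVert t = c := by
    conv_lhs => rw [← P.take_spec hc]
    rw [Walk.getVert_append]
    simp [← hR1, ← ht]
  -- the five path vertices
  set B1 := P.getVert (t - 2) with hB1
  set A1 := P.getVert (t - 1) with hA1
  set A2 := P.getVert (t + 1) with hA2
  set B2 := P.getVert (t + 2) with hB2
  have adj01 : G.Adj B1 A1 := by
    have := P.adj_getVert_succ (i := t - 2) (by omega)
    have e : t - 2 + 1 = t - 1 := by omega
    rwa [e] at this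
  have adj12 : G.Adj A1 c := by
    have := P.adj_getVert_succ (i := t - 1) (by omega)
    have e : t - 1 + 1 = t := by omega
    rwa [e, hPt] at this
  have adj23 : G.Adj c A2 := by
    have := P.adj_getVert_succ (i := t) (by omega)
    rwa [hPt] at this
  have adj34 : G.Adj A2 B2 := P.adj_getVert_succ (by omega)
  -- distinctness of path vertices
  have hinj5 : ∀ i j : ℕ, i ≤ L → j ≤ L → i ≠ j → P.getVert i ≠ P.getVert j :=
    fun i j hi hj hne heq => hne (getVert_inj P hP i j hi hj heq)
  have hB1c : B1 ≠ c := by rw [hB1, ← hPt]; exact hinj5 _ _ (by omega) (by omega) (by omega)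
  have hB2c : B2 ≠ c := by rw [hB2, ← hPt]; exact hinj5 _ _ (by omega) (by omega) (by omega)
  have hA1A2 : A1 ≠ A2 := hinj5 _ _ (by omega) (by omega) (by omega)
  have hA1B2 : A1 ≠ B2 := hinj5 _ _ (by omega) (by omega) (by omega)
  have hA2B1 : A2 ≠ B1 := hinj5 _ _ (by omega) (by omega) (by omega)
  -- y, z are off the path
  have hymem : ∀ i : ℕ, y ≠ P.getVert i := fun i h => hy (h ▸ getVert_mem_support' P i)
  have hzmem : ∀ i : ℕ, z ≠ P.getVert i := fun i h => hz (h ▸ getVert_mem_support' P i)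
  have hyA1 : y ≠ A1 := hymem _
  have hyA2 : y ≠ A2 := hymem _
  have hyB1 : y ≠ B1 := hymem _
  have hyB2 : y ≠ B2 := hymem _
  have hzc : z ≠ c := by rw [← hPt]; exact hzmem _
  have hzA1 : z ≠ A1 := hzmem _
  have hzA2 : z ≠ A2 := hzmem _
  -- non-adjacencies
  have n12 : ¬ G.Adj A1 A2 := no_path2_adj hac adj12 adj23 hA1A2
  have n13 : ¬ G.Adj A1 y := no_path2_adj hac adj12 hyc.symm hyA1.symm
  have n23 : ¬ G.Adj A2 y := no_path2_adj hac adj23.symm hyc.symm hyA2.symm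
  have ncb1 : ¬ G.Adj c B1 := no_path2_adj hac adj12.symm adj01.symm hB1c.symm
  have ncb2 : ¬ G.Adj c B2 := no_path2_adj hac adj23 adj34 hB2c.symm
  have ncb3 : ¬ G.Adj c z := no_path2_adj hac hyc.symm hzy.symm hzc.symm
  have n1b2 : ¬ G.Adj A1 B2 := no_path3_adj hac adj12 adj23 adj34 hA1A2 hB2c.symm hA1B2
  have n1b3 : ¬ G.Adj A1 z := no_path3_adj hac adj12 hyc.symm hzy.symm hyA1.symm hzc.symm hzA1.symm
  have n2b1 : ¬ G.Adj A2 B1 := no_path3_adj hac adj23.symm adj12.symm adj01.symm hA1A2.symm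
    hB1c.symm hA2B1
  have n2b3 : ¬ G.Adj A2 z := no_path3_adj hac adj23.symm hyc.symm hzy.symm hyA2.symm hzc.symm
    hzA2.symm
  have n3b1 : ¬ G.Adj y B1 := no_path3_adj hac hyc adj12.symm adj01.symm hyA1 hB1c.symm hyB1
  have n3b2 : ¬ G.Adj y B2 := no_path3_adj hac hyc adj23 adj34 hyA2 hB2c.symm hyB2
  exact spider_false (σp := fun v => σ v) σ.injective H adj12.symm adj23 hyc.symm
    adj01.symm adj34 hzy.symm n12 n13 n23 ncb1 ncb2 ncb3 n1b2 n1b3 n2b1 n2b3 n3b1 n3b2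

end Aux

/-- `G` is weakly closed: some labeling of the vertices by `1, …, n` is such that for
every edge `{i, j}` with `i < j` and every `i < k < j`, `{i,k} ∈ E(G)` or `{k,j} ∈ E(G)`. -/
def WeaklyClosed {V : Type*} [Fintype V] (G : SimpleGraph V) : Prop :=
  ∃ σ : V ≃ Fin (Fintype.card V), ∀ i j k : V,
    G.Adj i j → σ i < σ k → σ k < σ j → G.Adj i k ∨ G.Adj k j

section Aux2
variable {V : Type*} {G : SimpleGraph V}

lemma exists_sigma {V : Type*} [Fintype V] (key : V → ℕ) (hinj : Function.Injective key) :
    ∃ σ : V ≃ Fin (Fintype.card V), ∀ a b : V, σ a < σ b ↔ key a < key b := by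
  classical
  set e := Fintype.equivFin V with he
  set f : Fin (Fintype.card V) → ℕ := key ∘ e.symm with hf
  set τ := Tuple.sort f with hτ
  have hmono : StrictMono (f ∘ τ) :=
    (Tuple.monotone_sort f).strictMono_of_injective
      ((hinj.comp e.symm.injective).comp τ.injective)
  refine ⟨e.trans τ.symm, fun a b => ?_⟩
  have h1 : ∀ a : V, (f ∘ τ) ((e.trans τ.symm) a) = key a := by
    intro a; simp [hf]
  rw [← h1 a, ← h1 b]
  exact (hmono.lt_iff_lt).symm

lemma base_lt {N a b r s : ℕ} (hr : r < N) (hs : s < N) :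
    a * N + r < b * N + s ↔ a < b ∨ (a = b ∧ r < s) := by
  rcases lt_trichotomy a b with h | h | h
  · simp only [h, true_or, iff_true]
    calc a * N + r < a * N + N := by omega
    _ = (a + 1) * N := by ring
    _ ≤ b * N := Nat.mul_le_mul_right N h
    _ ≤ b * N + s := by omega
  · subst h
    simp [Nat.lt_irrefl]
  · have : b * N + s < a * N + r := by
      calc b * N + s < b * N + N := by omega
      _ = (b + 1) * N := by ring
      _ ≤ a * N := Nat.mul_le_mul_right N h
      _ ≤ a * N + r := by omega
    constructor
    · omega
    · rintro (h' | ⟨rfl, h'⟩) <;> omega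

lemma base_eq {N a b r s : ℕ} (hr : r < N) (hs : s < N) :
    a * N + r = b * N + s → a = b ∧ r = s := by
  intro h
  rcases lt_trichotomy a b with hh | hh | hh
  · have := (base_lt hr hs).mpr (Or.inl hh); omega
  · exact ⟨hh, by subst hh; omega⟩
  · have := (base_lt hs hr).mpr (Or.inl hh); omega

theorem backward_dir {V : Type*} [Fintype V] (G : SimpleGraph V) (hG : G.IsTree)
    {u w : V} (P : G.Walk u w) (hP : P.IsPath)
    (hdom : ∀ x : V, x ∈ P.support ∨ ∃ y ∈ P.support, G.Adj x y) :
    WeaklyClosed G := by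
  classical
  have hac : G.IsAcyclic := hG.IsAcyclic
  set n := Fintype.card V with hn
  set σ₀ := Fintype.equivFin V with hσ₀
  set L := P.length with hL
  have ixspec : ∀ v ∈ P.support, ∃ t, P.getVert t = v ∧ t ≤ L :=
    fun v hv => mem_support_iff_exists_getVert.mp hv
  set ix : V → ℕ := fun v => if hv : v ∈ P.support then (ixspec v hv).choose else 0 with hix
  have hix1 : ∀ v, v ∈ P.support → P.getVert (ix v) = v := by
    intro v hv; rw [hix]; simp only [hv, dif_pos]; exact (ixspec v hv).choose_spec.1
  have hix2 : ∀ v, v ∈ P.support → ix v ≤ L := by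
    intro v hv; rw [hix]; simp only [hv, dif_pos]; exact (ixspec v hv).choose_spec.2
  set nb : V → V := fun x => if hx : x ∈ P.support then x else (hdom x |>.resolve_left hx).choose
    with hnb
  have hnb1 : ∀ x, x ∉ P.support → nb x ∈ P.support ∧ G.Adj x (nb x) := by
    intro x hx
    rw [hnb]; simp only [hx, dif_neg, not_false_iff]
    exact ⟨((hdom x).resolve_left hx).choose_spec.1, ((hdom x).resolve_left hx).choose_spec.2⟩
  have hnbu : ∀ x v, x ∉ P.support → v ∈ P.support → G.Adj x v → nb x = v := by
    intro x v hx hv hadj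
    exact attach_unique hac P hx (hnb1 x hx).1 hv (hnb1 x hx).2 hadj
  have F3 : ∀ v v', v ∈ P.support → v' ∈ P.support → G.Adj v v' →
      ix v' = ix v + 1 ∨ ix v = ix v' + 1 := by
    intro v v' hv hv' hadj
    obtain ⟨i, hiL, hcase⟩ := edge_getVert P (adj_support_edge hG P hv hv' hadj)
    rcases hcase with ⟨hva, hvb⟩ | ⟨hva, hvb⟩
    · left
      have e1 : ix v = i := getVert_inj P hP _ _ (hix2 v hv) (by omega) (by rw [hix1 v hv, hva])
      have e2 : ix v' = i + 1 :=
        getVert_inj P hP _ _ (hix2 v' hv') (by omega) (by rw [hix1 v' hv', hvb])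
      omega
    · right
      have e1 : ix v' = i := getVert_inj P hP _ _ (hix2 v' hv') (by omega)
        (by rw [hix1 v' hv', hva])
      have e2 : ix v = i + 1 :=
        getVert_inj P hP _ _ (hix2 v hv) (by omega) (by rw [hix1 v hv, hvb])
      omega
  set Ix : V → ℕ := fun v => if v ∈ P.support then ix v else ix (nb v) with hIx
  set Off : V → ℕ := fun v => if v ∈ P.support then 0 else 1 + (σ₀ v : ℕ) with hOff
  set key : V → ℕ := fun v => Ix v * (n + 1) + Off v with hkey
  have hOffn : ∀ v, Off v < n + 1 := by
    intro v
    rw [hOff]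
    by_cases hv : v ∈ P.support
    · simp [hv]
    · simp only [hv, if_neg, not_false_iff]
      have := (σ₀ v).isLt; omega
  have keylt : ∀ a b, key a < key b ↔ Ix a < Ix b ∨ (Ix a = Ix b ∧ Off a < Off b) :=
    fun a b => base_lt (hOffn a) (hOffn b)
  have hinj : Function.Injective key := by
    intro a b hab
    obtain ⟨hIxe, hOffe⟩ := base_eq (hOffn a) (hOffn b) hab
    by_cases ha : a ∈ P.support <;> by_cases hb : b ∈ P.support
    · rw [← hix1 a ha, ← hix1 b hb]
      rw [hIx] at hIxe
      simp only [ha, hb, if_pos] at hIxe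
      rw [hIxe]
    · exfalso; rw [hOff] at hOffe
      simp only [ha, hb, if_pos, if_neg, not_false_iff] at hOffe
      omega
    · exfalso; rw [hOff] at hOffe
      simp only [ha, hb, if_pos, if_neg, not_false_iff] at hOffe
      omega
    · rw [hOff] at hOffe; simp only [ha, hb, if_neg, not_false_iff] at hOffe
      have : (σ₀ a : ℕ) = (σ₀ b : ℕ) := by omega
      exact σ₀.injective (Fin.ext this)
  obtain ⟨σ, hσ⟩ := exists_sigma key hinj
  refine ⟨σ, fun i j k hij h1 h2 => ?_⟩
  rw [hσ, keylt] at h1 h2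
  by_cases hi : i ∈ P.support <;> by_cases hj : j ∈ P.support
  · -- i, j on path
    by_cases hk : k ∈ P.support
    · exfalso
      rw [hIx, hOff] at h1 h2
      simp only [hi, hj, hk, if_pos] at h1 h2
      rcases F3 i j hi hj hij with hf | hf <;> omega
    · rw [hIx, hOff] at h1 h2
      simp only [hi, hj, hk, if_pos, if_neg, not_false_iff] at h1 h2
      rcases F3 i j hi hj hij with hf | hf
      · have hm : ix (nb k) = ix i := by omega
        have : nb k = i := by
          rw [← hix1 (nb k) (hnb1 k hk).1, ← hix1 i hi, hm]
        exact Or.inl (this ▸ (hnb1 k hk).2).symm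
      · exfalso; omega
  · -- i on path, j off path
    have hnbj : nb j = i := hnbu j i hj hi hij.symm
    by_cases hk : k ∈ P.support
    · exfalso
      rw [hIx, hOff] at h1 h2
      simp only [hi, hj, hk, if_pos, if_neg, not_false_iff] at h1 h2
      rw [hnbj] at h2
      omega
    · rw [hIx, hOff] at h1 h2
      simp only [hi, hj, hk, if_pos, if_neg, not_false_iff] at h1 h2
      rw [hnbj] at h2
      have hm : ix (nb k) = ix i := by omega
      have : nb k = i := by
        rw [← hix1 (nb k) (hnb1 k hk).1, ← hix1 i hi, hm]
      exact Or.inl (this ▸ (hnb1 k hk).2).symm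
  · -- i off path, j on path : impossible ordering
    exfalso
    have hnbi : nb i = j := hnbu i j hi hj hij
    by_cases hk : k ∈ P.support <;>
    · rw [hIx, hOff] at h1 h2
      simp only [hi, hj, hk, if_pos, if_neg, not_false_iff] at h1 h2
      rw [hnbi] at h1
      omega
  · -- both off path: impossible edge
    exact absurd hij (fun hadj => off_path_no_adj hac P hi hj (hnb1 i hi).1 (hnb1 j hj).1
      hadj (hnb1 i hi).2 (hnb1 j hj).2)

end Aux2

/-- A finite tree is weakly closed iff it is a caterpillar: there is a path such that
every vertex lies on the path or is adjacent to a vertex of the path. -/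
theorem tree_weaklyClosed_iff_caterpillar {V : Type*} [Fintype V] (G : SimpleGraph V)
    (hG : G.IsTree) :
    WeaklyClosed G ↔
      ∃ (u w : V) (P : G.Walk u w), P.IsPath ∧
        ∀ x : V, x ∈ P.support ∨ ∃ y ∈ P.support, G.Adj x y := by
  constructor
  · rintro ⟨σ, H⟩
    exact forward_dir G hG σ H
  · rintro ⟨u, w, P, hP, hdom⟩
    exact backward_dir G hG P hP hdom
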